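/- Let F be a field of characteristic not 2 and let A, B, C, D, S₀ be n×n matrices over F with S₀ invertible, S₀⁻¹AS₀ = C and S₀⁻¹BS₀ = D. With P(A,B) = (M₁, M₂(A,B)) defined by M₁ := I₂₀ ⊕ 0₁₀ ⊕ I₁ ⊕ M and M₂(A,B) := 0₂₀ ⊕ I₁₀ ⊕ I₁ ⊕ N₀(A,B), where (M, N₀(A,B)) = T₀(A,B), the pair P(A,B) is congruent to P(C,D): there is an invertible (31+4n)×(31+4n) matrix R with RᵀM₁R = M₁ and RᵀM₂(A,B)R = M₂(C,D). -/

import Mathlib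

open Matrix

/-- Index type for `4n × 4n` matrices written in `n × n` blocks. -/
abbrev Blk (n : ℕ) := (Fin n ⊕ Fin n) ⊕ (Fin n ⊕ Fin n)

/-- Index type for the `(31+4n) × (31+4n)` matrices of the pair `P(A,B)`. -/
abbrev PIdx (n : ℕ) := Fin 20 ⊕ (Fin 10 ⊕ (Fin 1 ⊕ Blk n))

instance (n : ℕ) : Fintype (PIdx n) := inferInstance
instance (n : ℕ) : DecidableEq (PIdx n) := inferInstance

/-- The first matrix `M` of the pair `T_ε(A,B)`, with block rows
`(0,0,I,0), (0,0,0,I), (2I,I,0,0), (0,2I,0,0)`. -/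
noncomputable def Mblock (F : Type*) [Field F] (n : ℕ) : Matrix (Blk n) (Blk n) F :=
  Matrix.fromBlocks 0 1 (Matrix.fromBlocks ((2 : F) • 1) 1 0 ((2 : F) • 1)) 0

/-- The second matrix `N_ε(A,B)` of the pair `T_ε(A,B)`, with block rows
`(0,0,A,0), (0,0,0,B), (εAᵀ,0,0,0), (0,εBᵀ,0,0)`. -/
noncomputable def Nblock {F : Type*} [Field F] {n : ℕ} (ε : F)
    (A B : Matrix (Fin n) (Fin n) F) : Matrix (Blk n) (Blk n) F :=
  Matrix.fromBlocks 0 (Matrix.fromBlocks A 0 0 B)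
    (Matrix.fromBlocks (ε • Aᵀ) 0 0 (ε • Bᵀ)) 0

/-- `M₁ := I₂₀ ⊕ 0₁₀ ⊕ I₁ ⊕ M`, the first matrix of the pair `P(A,B)`. -/
noncomputable def P1 (F : Type*) [Field F] (n : ℕ) : Matrix (PIdx n) (PIdx n) F :=
  Matrix.fromBlocks 1 0 0
    (Matrix.fromBlocks 0 0 0 (Matrix.fromBlocks 1 0 0 (Mblock F n)))

/-- `M₂(A,B) := 0₂₀ ⊕ I₁₀ ⊕ I₁ ⊕ N₀(A,B)`, the second matrix of the pair `P(A,B)`. -/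
noncomputable def P2 {F : Type*} [Field F] {n : ℕ}
    (A B : Matrix (Fin n) (Fin n) F) : Matrix (PIdx n) (PIdx n) F :=
  Matrix.fromBlocks 0 0 0
    (Matrix.fromBlocks 1 0 0 (Matrix.fromBlocks 1 0 0 (Nblock 0 A B)))

/-- If `S₀⁻¹AS₀ = C` and `S₀⁻¹BS₀ = D` with `S₀` invertible over a field of
characteristic not two, then the pair `P(A,B) = (M₁, M₂(A,B))` is congruent to
`P(C,D)`: there is an invertible matrix `R` with `RᵀM₁R = M₁` and
`RᵀM₂(A,B)R = M₂(C,D)`. -/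
theorem P_congruent_of_similar
    {F : Type*} [Field F] (h2 : (2 : F) ≠ 0)
    {n : ℕ} (A B C D S₀ : Matrix (Fin n) (Fin n) F)
    (hS : IsUnit S₀) (hC : S₀⁻¹ * A * S₀ = C) (hD : S₀⁻¹ * B * S₀ = D) :
    ∃ R : Matrix (PIdx n) (PIdx n) F, IsUnit R ∧
      Rᵀ * P1 F n * R = P1 F n ∧
      Rᵀ * P2 A B * R = P2 C D := by
  have hdet : IsUnit S₀.det := (Matrix.isUnit_iff_isUnit_det _).mp hS
  have hm1 : S₀ * S₀⁻¹ = 1 := Matrix.mul_nonsing_inv _ hdet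
  have hm2 : S₀⁻¹ * S₀ = 1 := Matrix.nonsing_inv_mul _ hdet
  have ht1 : S₀ᵀ * S₀⁻¹ᵀ = 1 := by rw [← Matrix.transpose_mul, hm2, Matrix.transpose_one]
  have ht2 : S₀⁻¹ᵀ * S₀ᵀ = 1 := by rw [← Matrix.transpose_mul, hm1, Matrix.transpose_one]
  subst hC hD
  refine ⟨Matrix.fromBlocks 1 0 0 (Matrix.fromBlocks 1 0 0 (Matrix.fromBlocks 1 0 0
    (Matrix.fromBlocks (Matrix.fromBlocks S₀⁻¹ᵀ 0 0 S₀⁻¹ᵀ) 0 0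
      (Matrix.fromBlocks S₀ 0 0 S₀)))), ?_, ?_, ?_⟩
  · apply (Matrix.isUnit_iff_isUnit_det _).mpr; apply Matrix.isUnit_det_of_left_inverse
      (B := Matrix.fromBlocks 1 0 0 (Matrix.fromBlocks 1 0 0 (Matrix.fromBlocks 1 0 0
        (Matrix.fromBlocks (Matrix.fromBlocks S₀ᵀ 0 0 S₀ᵀ) 0 0
          (Matrix.fromBlocks S₀⁻¹ 0 0 S₀⁻¹)))))
    simp [Matrix.fromBlocks_multiply, ht1, hm2, ← Matrix.fromBlocks_one]
  · simp [P1, Mblock, Matrix.fromBlocks_transpose, Matrix.fromBlocks_multiply,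
      Matrix.mul_smul, Matrix.smul_mul, Matrix.mul_assoc, ht1, ht2, hm2,
      Matrix.mul_one, Matrix.one_mul, Matrix.fromBlocks_one]
  · simp [P2, Nblock, Matrix.fromBlocks_transpose, Matrix.fromBlocks_multiply,
      Matrix.mul_assoc, ht1, ht2]
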